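/- Let n, d be positive integers, X ∈ ℝ^{n×d}, A : ℝ^n → ℝ^n a linear map, and e ∈ ℝ^n. For w ∈ ℝ^d let D(w) denote the diagonal 0/1 matrix with (D(w))_{kk} = 1 if (Xw)_k ≥ 0 and (D(w))_{kk} = 0 otherwise, and let 𝒫 := {D(w) : w ∈ ℝ^d}. Suppose (v_D*, u_D*)_{D ∈ 𝒫} is an optimal solution of the convex problem: it satisfies (2D − I) X v_D* ≥ 0 and (2D − I) X u_D* ≥ 0 componentwise for every D ∈ 𝒫, and it minimizes ‖e − A(Σ_{D ∈ 𝒫} D X (v_D − u_D))‖² over all such feasible families. Let m* := Σ_{D ∈ 𝒫} (1[v_D* ≠ 0] + 1[u_D* ≠ 0]) and let m ≥ m*. Then the infimum over (w_j, α_j)_{j=1}^m ∈ (ℝ^d × ℝ)^m of ‖e − A(Σ_{j=1}^m α_j ReLU(X w_j))‖² equals the optimal value of the convex problem, and this infimum is attained. Here ReLU acts componentwise: (ReLU(z))_k = max(z_k, 0), and ‖·‖ is the Euclidean norm. -/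
import Mathlib
open Matrix
open scoped Classical

noncomputable def actD (n : ℕ) (b : Fin n → Bool) : Matrix (Fin n) (Fin n) ℝ :=
  Matrix.diagonal (fun k => if b k then 1 else 0)

lemma actD_mulVec {n : ℕ} (b : Fin n → Bool) (z : Fin n → ℝ) (k : Fin n) :
    (actD n b *ᵥ z) k = if b k then z k else 0 := by
  simp [actD, Matrix.mulVec_diagonal, ite_mul]

lemma feas_apply {n : ℕ} (b : Fin n → Bool) (z : Fin n → ℝ) (k : Fin n) :
    ((((2 : ℝ) • actD n b) - 1) *ᵥ z) k = if b k then z k else -z k := by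
  rw [Matrix.sub_mulVec, Matrix.smul_mulVec, Matrix.one_mulVec]
  simp only [Pi.sub_apply, Pi.smul_apply, actD_mulVec, smul_eq_mul]
  split <;> ring

lemma relu_of_cone {n d : ℕ} (X : Matrix (Fin n) (Fin d) ℝ) (b : Fin n → Bool)
    (v : Fin d → ℝ)
    (h : ∀ k, 0 ≤ ((((2 : ℝ) • actD n b) - 1) *ᵥ (X *ᵥ v)) k) :
    (fun k' => max ((X *ᵥ v) k') 0) = actD n b *ᵥ (X *ᵥ v) := by
  funext k
  have := h k
  rw [feas_apply] at this
  rw [actD_mulVec]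
  split_ifs at this ⊢ with hb
  · exact max_eq_left this
  · exact max_eq_right (by linarith)

lemma self_cone {n d : ℕ} (X : Matrix (Fin n) (Fin d) ℝ) (w : Fin d → ℝ) :
    ∀ k, 0 ≤ ((((2 : ℝ) • actD n (fun k => decide (0 ≤ (X *ᵥ w) k))) - 1) *ᵥ (X *ᵥ w)) k := by
  intro k
  rw [feas_apply]
  by_cases h : 0 ≤ (X *ᵥ w) k <;> simp [h] <;> linarith

/-- linearity helper: M applied after X commutes with finite linear combinations. -/
lemma lin_comb {n d m' : ℕ} (M : Matrix (Fin n) (Fin n) ℝ) (X : Matrix (Fin n) (Fin d) ℝ)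
    (s : Finset (Fin m')) (c : Fin m' → ℝ) (w : Fin m' → Fin d → ℝ) :
    M *ᵥ (X *ᵥ (∑ j ∈ s, c j • w j)) = ∑ j ∈ s, c j • (M *ᵥ (X *ᵥ w j)) := by
  simp only [Matrix.mulVec_mulVec, ← Matrix.mulVecLin_apply, map_sum, _root_.map_smul]

/-- if `(v*, u*)` is an optimal solution of the convex
reformulation and the width `m` is at least the number `m*` of its nonzero
aggregated vectors, then the nonconvex two-layer ReLU training objective
attains its infimum, and this infimum equals the convex optimal value
(the objective evaluated at `(v*, u*)`). -/
theorem stmt_10 (n d : ℕ) (hn : 0 < n) (hd : 0 < d)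
    (X : Matrix (Fin n) (Fin d) ℝ)
    (A : (Fin n → ℝ) →ₗ[ℝ] (Fin n → ℝ))
    (e : Fin n → ℝ)
    (P : Finset (Fin n → Bool))
    (hP : ∀ b, b ∈ P ↔ ∃ w : Fin d → ℝ, b = fun k => decide (0 ≤ (X *ᵥ w) k))
    (vs us : (Fin n → Bool) → (Fin d → ℝ))
    (hfeas : ∀ b ∈ P, (∀ k, 0 ≤ ((((2 : ℝ) • actD n b) - 1) *ᵥ (X *ᵥ vs b)) k) ∧
                      (∀ k, 0 ≤ ((((2 : ℝ) • actD n b) - 1) *ᵥ (X *ᵥ us b)) k))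
    (hopt : ∀ v u : (Fin n → Bool) → (Fin d → ℝ),
      (∀ b ∈ P, (∀ k, 0 ≤ ((((2 : ℝ) • actD n b) - 1) *ᵥ (X *ᵥ v b)) k) ∧
                (∀ k, 0 ≤ ((((2 : ℝ) • actD n b) - 1) *ᵥ (X *ᵥ u b)) k)) →
      (∑ k, (e k - A (∑ b ∈ P, (actD n b) *ᵥ (X *ᵥ (vs b - us b))) k) ^ 2) ≤
        ∑ k, (e k - A (∑ b ∈ P, (actD n b) *ᵥ (X *ᵥ (v b - u b))) k) ^ 2)
    (m : ℕ)
    (hm : (∑ b ∈ P, ((if vs b ≠ 0 then 1 else 0) + (if us b ≠ 0 then 1 else 0))) ≤ m) :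
    IsLeast { r : ℝ | ∃ (w : Fin m → Fin d → ℝ) (α : Fin m → ℝ),
        r = ∑ k, (e k - A (∑ j, α j • (fun k' => max ((X *ᵥ w j) k') 0)) k) ^ 2 }
      (∑ k, (e k - A (∑ b ∈ P, (actD n b) *ᵥ (X *ᵥ (vs b - us b))) k) ^ 2) := by
  constructor
  · -- membership: construct a width-m network achieving the convex value
    classical
    set S1 : Finset (Fin n → Bool) := P.filter (fun b => vs b ≠ 0) with hS1
    set S2 : Finset (Fin n → Bool) := P.filter (fun b => us b ≠ 0) with hS2
    set t : Finset ((Fin n → Bool) × Bool) :=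
      S1.image (fun b => (b, true)) ∪ S2.image (fun b => (b, false)) with ht
    have hdisj : Disjoint (S1.image (fun b => (b, true))) (S2.image (fun b => (b, false))) := by
      simp [Finset.disjoint_left]
    have htcard : t.card = S1.card + S2.card := by
      rw [ht, Finset.card_union_of_disjoint hdisj,
        Finset.card_image_of_injective _ (fun a b h => (Prod.mk.injEq _ _ _ _ ▸ h).1),
        Finset.card_image_of_injective _ (fun a b h => (Prod.mk.injEq _ _ _ _ ▸ h).1)]
    have htm : t.card ≤ m := by
      rw [htcard]
      calc S1.card + S2.card
          = ∑ b ∈ P, ((if vs b ≠ 0 then 1 else 0) + (if us b ≠ 0 then 1 else 0)) := by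
            rw [Finset.sum_add_distrib, hS1, hS2, Finset.card_filter, Finset.card_filter]
        _ ≤ m := hm
    obtain ⟨ι⟩ : Nonempty ({x // x ∈ t} ↪ Fin m) := by
      rw [Function.Embedding.nonempty_iff_card_le, Fintype.card_coe, Fintype.card_fin]
      exact htm
    -- neuron data
    set W : {x // x ∈ t} → (Fin d → ℝ) := fun x => if x.1.2 then vs x.1.1 else us x.1.1 with hW
    set C : {x // x ∈ t} → ℝ := fun x => if x.1.2 then 1 else -1 with hC
    refine ⟨fun j => if h : ∃ x, ι x = j then W h.choose else 0,
            fun j => if h : ∃ x, ι x = j then C h.choose else 0, ?_⟩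
    have hsum : (∑ j, (if h : ∃ x, ι x = j then C h.choose else 0) •
          (fun k' => max ((X *ᵥ (if h : ∃ x, ι x = j then W h.choose else 0)) k') 0))
        = ∑ b ∈ P, (actD n b) *ᵥ (X *ᵥ (vs b - us b)) := by
      have hzero : ∀ j ∈ Finset.univ, j ∉ Finset.univ.map ι →
          (if h : ∃ x, ι x = j then C h.choose else 0) •
            (fun k' => max ((X *ᵥ (if h : ∃ x, ι x = j then W h.choose else 0)) k') 0) = 0 := by
        intro j _ hj
        have : ¬ ∃ x, ι x = j := by
          rintro ⟨x, rfl⟩; exact hj (Finset.mem_map.2 ⟨x, Finset.mem_univ _, rfl⟩)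
        simp [this]
      rw [← Finset.sum_subset (Finset.subset_univ (Finset.univ.map ι)) hzero, Finset.sum_map]
      have hterm : ∀ x : {x // x ∈ t},
          (if h : ∃ y, ι y = ι x then C h.choose else 0) •
            (fun k' => max ((X *ᵥ (if h : ∃ y, ι y = ι x then W h.choose else 0)) k') 0)
          = C x • (actD n x.1.1 *ᵥ (X *ᵥ W x)) := by
        intro x
        have hex : ∃ y, ι y = ι x := ⟨x, rfl⟩
        have hxc : hex.choose = x := ι.injective hex.choose_spec
        rw [dif_pos hex, dif_pos hex, hxc]
        congr 1
        have hmemP : x.1.1 ∈ P := by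
          have := x.2
          simp only [ht, Finset.mem_union, Finset.mem_image] at this
          rcases this with ⟨b, hb, hb2⟩ | ⟨b, hb, hb2⟩ <;>
            · rw [← congrArg Prod.fst hb2]
              exact Finset.mem_of_mem_filter _ hb
        rcases hfeas _ hmemP with ⟨h1, h2⟩
        rw [hW]
        by_cases hx : x.1.2
        · simp only [hx, if_true]; exact relu_of_cone X _ _ h1
        · simp only [hx, if_false]; exact relu_of_cone X _ _ h2
      rw [Finset.sum_congr rfl (fun x _ => hterm x)]
      rw [show (∑ x : {x // x ∈ t}, C x • (actD n x.1.1 *ᵥ (X *ᵥ W x)))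
          = ∑ p ∈ t, (if p.2 then (1:ℝ) else -1) •
              (actD n p.1 *ᵥ (X *ᵥ (if p.2 then vs p.1 else us p.1))) from by
        rw [← Finset.sum_attach t (fun p => (if p.2 then (1:ℝ) else -1) •
              (actD n p.1 *ᵥ (X *ᵥ (if p.2 then vs p.1 else us p.1))))]
        rfl]
      rw [ht, Finset.sum_union hdisj,
        Finset.sum_image (fun a _ b _ h => (Prod.mk.injEq _ _ _ _ ▸ h).1),
        Finset.sum_image (fun a _ b _ h => (Prod.mk.injEq _ _ _ _ ▸ h).1)]
      have hL : ∀ b ∈ S1, (if true = true then (1:ℝ) else -1) •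
            (actD n b *ᵥ (X *ᵥ (if true = true then vs b else us b)))
          = actD n b *ᵥ (X *ᵥ vs b) := by
        intro b _; simp
      have hR : ∀ b ∈ S2, (if false = true then (1:ℝ) else -1) •
            (actD n b *ᵥ (X *ᵥ (if false = true then vs b else us b)))
          = -(actD n b *ᵥ (X *ᵥ us b)) := by
        intro b _; simp
      rw [Finset.sum_congr rfl hL, Finset.sum_congr rfl hR]
      have e1 : ∑ b ∈ S1, actD n b *ᵥ (X *ᵥ vs b) = ∑ b ∈ P, actD n b *ᵥ (X *ᵥ vs b) := by
        apply Finset.sum_subset (Finset.filter_subset _ _)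
        intro b hb hb'
        have : vs b = 0 := by
          by_contra h
          exact hb' (Finset.mem_filter.2 ⟨hb, h⟩)
        simp [this]
      have e2 : ∑ b ∈ S2, -(actD n b *ᵥ (X *ᵥ us b)) = ∑ b ∈ P, -(actD n b *ᵥ (X *ᵥ us b)) := by
        apply Finset.sum_subset (Finset.filter_subset _ _)
        intro b hb hb'
        have : us b = 0 := by
          by_contra h
          exact hb' (Finset.mem_filter.2 ⟨hb, h⟩)
        simp [this]
      rw [e1, e2, ← Finset.sum_add_distrib]
      apply Finset.sum_congr rfl
      intro b _
      rw [Matrix.mulVec_sub, Matrix.mulVec_sub]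
      abel
    rw [hsum]
  · -- lower bound
    rintro r ⟨w, α, rfl⟩
    set pat : Fin m → (Fin n → Bool) := fun j => fun k => decide (0 ≤ (X *ᵥ w j) k) with hpat
    set v : (Fin n → Bool) → (Fin d → ℝ) :=
      fun b => ∑ j ∈ Finset.univ.filter (fun j => pat j = b ∧ 0 ≤ α j), α j • w j with hv
    set u : (Fin n → Bool) → (Fin d → ℝ) :=
      fun b => ∑ j ∈ Finset.univ.filter (fun j => pat j = b ∧ α j < 0), (-α j) • w j with hu
    have hfeas' : ∀ b ∈ P,
        (∀ k, 0 ≤ ((((2 : ℝ) • actD n b) - 1) *ᵥ (X *ᵥ v b)) k) ∧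
        (∀ k, 0 ≤ ((((2 : ℝ) • actD n b) - 1) *ᵥ (X *ᵥ u b)) k) := by
      intro b _
      constructor
      · intro k
        rw [hv, lin_comb, Finset.sum_apply]
        apply Finset.sum_nonneg
        intro j hj
        rcases Finset.mem_filter.1 hj with ⟨_, hjb, hja⟩
        rw [Pi.smul_apply, smul_eq_mul]
        exact mul_nonneg hja (hjb ▸ self_cone X (w j) k)
      · intro k
        rw [hu, lin_comb, Finset.sum_apply]
        apply Finset.sum_nonneg
        intro j hj
        rcases Finset.mem_filter.1 hj with ⟨_, hjb, hja⟩
        rw [Pi.smul_apply, smul_eq_mul]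
        exact mul_nonneg (by linarith) (hjb ▸ self_cone X (w j) k)
    have harg : ∑ b ∈ P, actD n b *ᵥ (X *ᵥ (v b - u b))
        = ∑ j, α j • (fun k' => max ((X *ᵥ w j) k') 0) := by
      have h1 : ∀ b ∈ P, actD n b *ᵥ (X *ᵥ (v b - u b))
          = ∑ j ∈ Finset.univ.filter (fun j => pat j = b),
              α j • (fun k' => max ((X *ᵥ w j) k') 0) := by
        intro b _
        have hsplit : Finset.univ.filter (fun j => pat j = b)
            = Finset.univ.filter (fun j => pat j = b ∧ 0 ≤ α j)
              ∪ Finset.univ.filter (fun j => pat j = b ∧ α j < 0) := by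
          ext j
          simp only [Finset.mem_filter, Finset.mem_union, Finset.mem_univ, true_and]
          constructor
          · intro h
            rcases le_or_gt 0 (α j) with h' | h'
            · exact Or.inl ⟨h, h'⟩
            · exact Or.inr ⟨h, h'⟩
          · rintro (⟨h, _⟩ | ⟨h, _⟩) <;> exact h
        have hdisj2 : Disjoint (Finset.univ.filter (fun j => pat j = b ∧ 0 ≤ α j))
            (Finset.univ.filter (fun j => pat j = b ∧ α j < 0)) := by
          rw [Finset.disjoint_left]
          intro j h1 h2
          rcases Finset.mem_filter.1 h1 with ⟨_, _, ha⟩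
          rcases Finset.mem_filter.1 h2 with ⟨_, _, hb'⟩
          linarith
        have hvu : v b - u b = ∑ j ∈ Finset.univ.filter (fun j => pat j = b), α j • w j := by
          rw [hsplit, Finset.sum_union hdisj2, hv, hu]
          simp only [neg_smul, Finset.sum_neg_distrib, sub_neg_eq_add]
        rw [hvu, lin_comb]
        apply Finset.sum_congr rfl
        intro j hj
        rcases Finset.mem_filter.1 hj with ⟨_, hjb⟩
        rw [relu_of_cone X (pat j) (w j) (self_cone X (w j)), hjb]
      rw [Finset.sum_congr rfl h1]
      exact Finset.sum_fiberwise_of_maps_to (fun j _ => (hP (pat j)).2 ⟨w j, rfl⟩) _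
    calc (∑ k, (e k - A (∑ b ∈ P, (actD n b) *ᵥ (X *ᵥ (vs b - us b))) k) ^ 2)
        ≤ ∑ k, (e k - A (∑ b ∈ P, (actD n b) *ᵥ (X *ᵥ (v b - u b))) k) ^ 2 := hopt v u hfeas'
      _ = ∑ k, (e k - A (∑ j, α j • (fun k' => max ((X *ᵥ w j) k') 0)) k) ^ 2 := by rw [harg]
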